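/- Let G be a group acting on a set M and let N ⊆ M be a subset. Define Ñ = G × N with G-action g·(h,x) = (gh, x), and ι : Ñ → M by ι(h,x) = h·x. Then ι is G-equivariant, and the following are equivalent: (i) for every p ∈ M the stabilizer G_p acts transitively on ι⁻¹(p); (ii) for every g ∈ G, N ∩ g·N = N^g, where N^g = {x ∈ N : g·x = x}. -/
import Mathlib


open scoped Pointwise

/-- Let `N ⊆ M` and `Ñ = G × N` with action `g • (h, x) = (g*h, x)` and
`ι(h, x) = h • x`. Then `ι` is `G`-equivariant, and the stabilizer `G_p` acts
transitively on every fiber `ι⁻¹(p)` iff `N ∩ g • N = N^g` for all `g`. -/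
theorem stmt_2 {G M : Type*} [Group G] [MulAction G M] (N : Set M) :
    (∀ (g h : G) (x : N), (g * h) • (x : M) = g • (h • (x : M))) ∧
    ((∀ (p : M) (h₁ h₂ : G) (x₁ x₂ : N),
        h₁ • (x₁ : M) = p → h₂ • (x₂ : M) = p →
        ∃ g : G, g • p = p ∧ g * h₁ = h₂ ∧ x₁ = x₂) ↔
      (∀ g : G, N ∩ g • N = {x | x ∈ N ∧ g • x = x})) := by
  refine ⟨fun g h x => mul_smul g h (x : M), ?_, ?_⟩
  · intro H g
    ext x
    constructor
    · rintro ⟨hxN, y, hyN, rfl⟩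
      obtain ⟨k, hk, hk1, hxy⟩ := H (g • y) 1 g ⟨g • y, hxN⟩ ⟨y, hyN⟩ (one_smul _ _) rfl
      have hval : g • y = y := congrArg Subtype.val hxy
      exact ⟨hxN, by simpa using congrArg (g • ·) hval⟩
    · rintro ⟨hxN, hfix⟩
      exact ⟨hxN, x, hxN, hfix⟩
  · intro H p h₁ h₂ x₁ x₂ e₁ e₂
    have key : (x₁ : M) = (h₁⁻¹ * h₂) • (x₂ : M) := by
      rw [mul_smul, e₂, ← e₁, inv_smul_smul]
    have hx₁ : (x₁ : M) ∈ N ∩ (h₁⁻¹ * h₂) • N := ⟨x₁.2, x₂, x₂.2, key.symm⟩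
    rw [H] at hx₁
    have hfix : (h₁⁻¹ * h₂) • (x₁ : M) = x₁ := hx₁.2
    have hx : (x₁ : M) = x₂ := by
      have := key
      rw [← hfix] at this
      exact smul_left_cancel _ this
    refine ⟨h₂ * h₁⁻¹, ?_, by group, Subtype.ext hx⟩
    calc (h₂ * h₁⁻¹) • p = h₂ • (h₁⁻¹ • p) := mul_smul _ _ _
      _ = h₂ • (x₁ : M) := by rw [← e₁, inv_smul_smul]
      _ = h₂ • (x₂ : M) := by rw [hx]
      _ = p := e₂
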